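/- For the slicer map S_α with α ∈ (0,2), the coarse-grained distribution has heavy tails: there exist constants c, C > 0 such that for all n and all j with 1 ≪ |j| < n of the correct parity, c |j|^{−(α+1)} ≤ ρ^G_n(j) ≤ C |j|^{−(α+1)}; more precisely ρ^G_n(j) · |j|^{α+1} → 2α as |j| → ∞ (with |j| < n of matching parity). Moreover ρ^G_n(±n) = (n−1+2^{1/α})^{−α} ∼ n^{−α}. -/

import Mathlib

open Filter

noncomputable def ella (α : ℝ) (m : ℤ) : ℝ :=
  (((|m| : ℤ) : ℝ) + (2:ℝ) ^ (1/α)) ^ (-α)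

/-- The coarse-grained distribution of the slicer map `S_α` at time `n`:
`A_{±n} = ℓ_{n-1}`, `A_j = ℓ_{|j|-1} - ℓ_{|j|+1}` for `0 < |j| < n` with
`j ≡ n (mod 2)`, `A_0 = 2(ℓ_0 - ℓ_1)` for even `n`, and `A_j = 0` otherwise. -/
noncomputable def Acg (α : ℝ) (n : ℕ) (j : ℤ) : ℝ :=
  if |j| = (n:ℤ) then ella α ((n:ℤ) - 1)
  else if j = 0 ∧ Even n then 2 * (ella α 0 - ella α 1)
  else if 0 < |j| ∧ |j| < (n:ℤ) ∧ j % 2 = (n:ℤ) % 2 then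
    ella α (|j| - 1) - ella α (|j| + 1)
  else 0

/-- The mean square displacement (`p = 2`) and more generally the `p`-th moment of
the coarse-grained distribution. -/
noncomputable def momentCG (α : ℝ) (p : ℕ) (n : ℕ) : ℝ :=
  ∑ j ∈ Finset.Icc (-(n:ℤ)) (n:ℤ), Acg α n j * (j:ℝ) ^ p

lemma my_tendsto_div_add_const (c : ℝ) :
    Tendsto (fun x : ℝ => x / (x + c)) atTop (nhds 1) := by
  have h1 : Tendsto (fun x : ℝ => x + c) atTop atTop :=
    tendsto_atTop_add_const_right _ _ tendsto_id
  have h2 : Tendsto (fun x : ℝ => c / (x + c)) atTop (nhds 0) :=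
    tendsto_const_nhds.div_atTop h1
  have h3 : Tendsto (fun x : ℝ => 1 - c / (x + c)) atTop (nhds 1) := by
    simpa using tendsto_const_nhds.sub h2
  refine h3.congr' ?_
  filter_upwards [eventually_gt_atTop (|c| + 1)] with x hx
  have hxc : 0 < x + c := by nlinarith [neg_abs_le c, abs_nonneg c]
  field_simp
  ring

lemma my_mvt_rpow (α : ℝ) (hα : 0 < α) {a b : ℝ} (ha : 0 < a) (hab : a < b) :
    α * (b - a) * b ^ (-α - 1) ≤ a ^ (-α) - b ^ (-α) ∧
      a ^ (-α) - b ^ (-α) ≤ α * (b - a) * a ^ (-α - 1) := by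
  obtain ⟨ξ, hξ, hslope⟩ := exists_hasDerivAt_eq_slope (fun t : ℝ => t ^ (-α))
    (fun t : ℝ => (-α) * t ^ (-α - 1)) hab
    (fun t ht => (Real.continuousAt_rpow_const t (-α)
      (Or.inl (ne_of_gt (lt_of_lt_of_le ha ht.1)))).continuousWithinAt)
    (fun t ht => Real.hasDerivAt_rpow_const (Or.inl (ne_of_gt (ha.trans ht.1))))
  have hξ0 : 0 < ξ := ha.trans hξ.1
  have hba : b - a ≠ 0 := sub_ne_zero.mpr (ne_of_gt hab)
  rw [eq_div_iff hba] at hslope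
  have key : a ^ (-α) - b ^ (-α) = α * (b - a) * ξ ^ (-α - 1) := by
    linear_combination hslope
  have e1 : ξ ^ (-α - 1) ≤ a ^ (-α - 1) :=
    Real.rpow_le_rpow_of_nonpos ha hξ.1.le (by linarith)
  have e2 : b ^ (-α - 1) ≤ ξ ^ (-α - 1) :=
    Real.rpow_le_rpow_of_nonpos hξ0 hξ.2.le (by linarith)
  have hnn : 0 ≤ α * (b - a) := by nlinarith
  constructor
  · rw [key]; exact mul_le_mul_of_nonneg_left e2 hnn
  · rw [key]; exact mul_le_mul_of_nonneg_left e1 hnn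

lemma my_tendsto_ratio (p : ℝ) (c : ℝ) :
    Tendsto (fun x : ℝ => (x / (x - 1 + c)) ^ p) atTop (nhds 1) := by
  have h : Tendsto (fun x : ℝ => x / (x + (c - 1))) atTop (nhds 1) :=
    my_tendsto_div_add_const (c - 1)
  have h2 : Tendsto (fun x : ℝ => (x / (x + (c - 1))) ^ p) atTop (nhds 1) := by
    simpa using h.rpow_const (Or.inl one_ne_zero)
  refine h2.congr fun x => by ring_nf

lemma my_tendsto_F (α b : ℝ) (hα : 0 < α) (hb : 0 < b) :
    Tendsto (fun x : ℝ => ((x - 1 + b) ^ (-α) - (x + 1 + b) ^ (-α)) * x ^ (α + 1))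
      atTop (nhds (2 * α)) := by
  have hlow : Tendsto (fun x : ℝ => 2 * α * (x / (x - 1 + (b + 2))) ^ (α + 1))
      atTop (nhds (2 * α)) := by
    simpa using (my_tendsto_ratio (α + 1) (b + 2)).const_mul (2 * α)
  have hhigh : Tendsto (fun x : ℝ => 2 * α * (x / (x - 1 + b)) ^ (α + 1))
      atTop (nhds (2 * α)) := by
    simpa using (my_tendsto_ratio (α + 1) b).const_mul (2 * α)
  refine tendsto_of_tendsto_of_tendsto_of_le_of_le' hlow hhigh ?_ ?_
  · filter_upwards [eventually_ge_atTop 1] with x hx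
    have hA : 0 < x - 1 + b := by linarith
    have hB : 0 < x + 1 + b := by linarith
    have hx0 : (0:ℝ) ≤ x := by linarith
    have hmvt := my_mvt_rpow α hα hA (by linarith : x - 1 + b < x + 1 + b)
    have hxp : (0:ℝ) ≤ x ^ (α + 1) := Real.rpow_nonneg hx0 _
    have key : ∀ y : ℝ, 0 < y → (x / y) ^ (α + 1) = y ^ (-α - 1) * x ^ (α + 1) := by
      intro y hy
      rw [Real.div_rpow hx0 hy.le, div_eq_mul_inv, ← Real.rpow_neg hy.le,
        show -(α + 1) = -α - 1 by ring, mul_comm]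
    calc 2 * α * (x / (x - 1 + (b + 2))) ^ (α + 1)
        = (α * ((x + 1 + b) - (x - 1 + b)) * (x + 1 + b) ^ (-α - 1)) * x ^ (α + 1) := by
          rw [show x - 1 + (b + 2) = x + 1 + b by ring, key _ hB]; ring
      _ ≤ ((x - 1 + b) ^ (-α) - (x + 1 + b) ^ (-α)) * x ^ (α + 1) :=
          mul_le_mul_of_nonneg_right hmvt.1 hxp
  · filter_upwards [eventually_ge_atTop 1] with x hx
    have hA : 0 < x - 1 + b := by linarith
    have hx0 : (0:ℝ) ≤ x := by linarith
    have hmvt := my_mvt_rpow α hα hA (by linarith : x - 1 + b < x + 1 + b)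
    have hxp : (0:ℝ) ≤ x ^ (α + 1) := Real.rpow_nonneg hx0 _
    have key : (x / (x - 1 + b)) ^ (α + 1) = (x - 1 + b) ^ (-α - 1) * x ^ (α + 1) := by
      rw [Real.div_rpow hx0 hA.le, div_eq_mul_inv, ← Real.rpow_neg hA.le,
        show -(α + 1) = -α - 1 by ring, mul_comm]
    calc ((x - 1 + b) ^ (-α) - (x + 1 + b) ^ (-α)) * x ^ (α + 1)
        ≤ (α * ((x + 1 + b) - (x - 1 + b)) * (x - 1 + b) ^ (-α - 1)) * x ^ (α + 1) :=
          mul_le_mul_of_nonneg_right hmvt.2 hxp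
      _ = 2 * α * (x / (x - 1 + b)) ^ (α + 1) := by rw [key]; ring

lemma my_tendsto_edge (α b : ℝ) (hb : 0 < b) :
    Tendsto (fun x : ℝ => (x - 1 + b) ^ (-α) * x ^ α) atTop (nhds 1) := by
  refine (my_tendsto_ratio α b).congr' ?_
  filter_upwards [eventually_ge_atTop 1] with x hx
  have hA : 0 < x - 1 + b := by linarith
  rw [Real.div_rpow (by linarith : (0:ℝ) ≤ x) hA.le, div_eq_mul_inv,
    ← Real.rpow_neg hA.le, mul_comm]

lemma Acg_eq_of_lt (α : ℝ) (n : ℕ) (j : ℤ) (h2 : 2 ≤ |j|) (hlt : |j| < (n:ℤ))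
    (hpar : j % 2 = (n:ℤ) % 2) :
    Acg α n j = (((|j| : ℤ) : ℝ) - 1 + (2:ℝ) ^ (1/α)) ^ (-α)
      - (((|j| : ℤ) : ℝ) + 1 + (2:ℝ) ^ (1/α)) ^ (-α) := by
  have hj0 : ¬(j = 0 ∧ Even n) := by rintro ⟨rfl, -⟩; simp at h2
  rw [Acg, if_neg (ne_of_lt hlt), if_neg hj0, if_pos ⟨by omega, hlt, hpar⟩, ella, ella,
    abs_of_nonneg (by omega : (0:ℤ) ≤ |j| - 1), abs_of_nonneg (by omega : (0:ℤ) ≤ |j| + 1)]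
  push_cast
  ring_nf

lemma Acg_edge (α : ℝ) (n : ℕ) (hn : 1 ≤ n) :
    Acg α n (n:ℤ) = ((n:ℝ) - 1 + (2:ℝ) ^ (1/α)) ^ (-α)
      ∧ Acg α n (-(n:ℤ)) = ((n:ℝ) - 1 + (2:ℝ) ^ (1/α)) ^ (-α) := by
  have h1 : |(n:ℤ)| = (n:ℤ) := abs_of_nonneg (Int.natCast_nonneg n)
  have h2 : |(-(n:ℤ))| = (n:ℤ) := by rw [abs_neg]; exact h1
  have h3 : |(n:ℤ) - 1| = (n:ℤ) - 1 := abs_of_nonneg (by omega)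
  constructor
  · rw [Acg, if_pos h1, ella, h3]; push_cast; ring_nf
  · rw [Acg, if_pos h2, ella, h3]; push_cast; ring_nf

/-- heavy tails of the coarse-grained distribution `ρ^G_n(j) = A_j`:
two-sided bounds `c|j|^{-(α+1)} ≤ ρ^G_n(j) ≤ C|j|^{-(α+1)}` for large `|j| < n` of the
correct parity; more precisely `ρ^G_n(j)·|j|^{α+1} → 2α` as `|j| → ∞` (uniformly in `n`
with `|j| < n` of matching parity); and `ρ^G_n(±n) = (n-1+2^{1/α})^{-α} ∼ n^{-α}`. -/
theorem heavy_tails (α : ℝ) (hα : α ∈ Set.Ioo (0:ℝ) 2) :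
    (∃ c C : ℝ, 0 < c ∧ 0 < C ∧ ∃ J : ℤ, ∀ n : ℕ, ∀ j : ℤ,
        J ≤ |j| → |j| < (n:ℤ) → j % 2 = (n:ℤ) % 2 →
        c * ((|j| : ℤ) : ℝ) ^ (-(α + 1)) ≤ Acg α n j ∧
        Acg α n j ≤ C * ((|j| : ℤ) : ℝ) ^ (-(α + 1))) ∧
    (∀ ε : ℝ, 0 < ε → ∃ J : ℤ, ∀ n : ℕ, ∀ j : ℤ,
        J ≤ |j| → |j| < (n:ℤ) → j % 2 = (n:ℤ) % 2 →
        |Acg α n j * ((|j| : ℤ) : ℝ) ^ (α + 1) - 2 * α| < ε) ∧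
    (∀ n : ℕ, 1 ≤ n →
        Acg α n (n:ℤ) = ((n:ℝ) - 1 + (2:ℝ)^(1/α)) ^ (-α) ∧
        Acg α n (-(n:ℤ)) = ((n:ℝ) - 1 + (2:ℝ)^(1/α)) ^ (-α)) ∧
    Tendsto (fun n : ℕ => Acg α n (n:ℤ) * (n:ℝ)^α) atTop (nhds 1) := by
  obtain ⟨hα0, -⟩ := hα
  have hb : (0:ℝ) < (2:ℝ) ^ (1/α) := Real.rpow_pos_of_pos two_pos _
  -- statement 2
  have hS2 : ∀ ε : ℝ, 0 < ε → ∃ J : ℤ, ∀ n : ℕ, ∀ j : ℤ,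
      J ≤ |j| → |j| < (n:ℤ) → j % 2 = (n:ℤ) % 2 →
      |Acg α n j * ((|j| : ℤ) : ℝ) ^ (α + 1) - 2 * α| < ε := by
    intro ε hε
    obtain ⟨X, hX⟩ := Metric.tendsto_atTop.mp (my_tendsto_F α _ hα0 hb) ε hε
    refine ⟨max 2 ⌈X⌉, fun n j hj hlt hpar => ?_⟩
    have h2 : (2:ℤ) ≤ |j| := le_trans (le_max_left _ _) hj
    have hm : X ≤ ((|j| : ℤ) : ℝ) := by
      have h3 : (⌈X⌉ : ℤ) ≤ |j| := le_trans (le_max_right _ _) hj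
      calc X ≤ (⌈X⌉ : ℝ) := Int.le_ceil X
        _ ≤ ((|j| : ℤ) : ℝ) := by exact_mod_cast h3
    have := hX ((|j| : ℤ) : ℝ) hm
    rw [Real.dist_eq] at this
    rw [Acg_eq_of_lt α n j h2 hlt hpar]
    exact this
  refine ⟨?_, hS2, fun n hn => Acg_edge α n hn, ?_⟩
  · -- statement 1 from statement 2 with ε = α
    obtain ⟨J, hJ⟩ := hS2 α hα0
    refine ⟨α, 3 * α, hα0, by linarith, max J 1, fun n j hj hlt hpar => ?_⟩
    have h := abs_lt.mp (hJ n j (le_trans (le_max_left _ _) hj) hlt hpar)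
    have hm0 : (0:ℝ) < ((|j| : ℤ) : ℝ) := by
      have : (1:ℤ) ≤ |j| := le_trans (le_max_right _ _) hj
      exact_mod_cast lt_of_lt_of_le zero_lt_one this
    set m : ℝ := ((|j| : ℤ) : ℝ)
    have hm1 : m ^ (α + 1) * m ^ (-(α + 1)) = 1 := by
      rw [← Real.rpow_add hm0, show α + 1 + -(α+1) = 0 by ring, Real.rpow_zero]
    have hmp : (0:ℝ) < m ^ (-(α + 1)) := Real.rpow_pos_of_pos hm0 _
    constructor
    · calc α * m ^ (-(α + 1)) ≤ (Acg α n j * m ^ (α + 1)) * m ^ (-(α + 1)) :=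
            mul_le_mul_of_nonneg_right (by linarith) hmp.le
        _ = Acg α n j := by rw [mul_assoc, hm1, mul_one]
    · calc Acg α n j = (Acg α n j * m ^ (α + 1)) * m ^ (-(α + 1)) := by
            rw [mul_assoc, hm1, mul_one]
        _ ≤ 3 * α * m ^ (-(α + 1)) :=
            mul_le_mul_of_nonneg_right (by linarith) hmp.le
  · -- statement 4
    have hcomp := (my_tendsto_edge α _ hb).comp tendsto_natCast_atTop_atTop (α := ℕ)
    refine hcomp.congr' ?_
    filter_upwards [eventually_ge_atTop 1] with n hn
    simp only [Function.comp_apply]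
    rw [(Acg_edge α n hn).1]
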